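/- For an arbitrary subset A of ℝ, if the space H(A) is σ-compact, then ℝ \ A is countable and ℝ \ A is nowhere dense in H(A). -/

import Mathlib

open Set TopologicalSpace Topology

/-- The Hattori topology τ(A) on ℝ: generated by the Euclidean open sets together with
all sets [x, x+ε) with x ∈ ℝ \ A and ε > 0. -/
def hattori (A : Set ℝ) : TopologicalSpace ℝ :=
  TopologicalSpace.generateFrom
    ({s : Set ℝ | IsOpen s} ∪ {s : Set ℝ | ∃ x ∉ A, ∃ ε > 0, s = Set.Ico x (x + ε)})

lemma isOpen_hattori_of_isOpen {A : Set ℝ} {U : Set ℝ} (hU : IsOpen U) :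
    IsOpen[hattori A] U :=
  TopologicalSpace.GenerateOpen.basic U (Or.inl hU)

lemma isOpen_hattori_Ico {A : Set ℝ} {x : ℝ} (hx : x ∉ A) {ε : ℝ} (hε : 0 < ε) :
    IsOpen[hattori A] (Set.Ico x (x + ε)) :=
  TopologicalSpace.GenerateOpen.basic _ (Or.inr ⟨x, hx, ε, hε, rfl⟩)

lemma hattori_le (A : Set ℝ) : hattori A ≤ (inferInstance : TopologicalSpace ℝ) :=
  TopologicalSpace.le_def.mpr fun _ hU => isOpen_hattori_of_isOpen hU

/-- Every Hattori-open set contains a right half-open interval around each of its points. -/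
lemma hattori_exists_Ico {A : Set ℝ} {U : Set ℝ} (hU : IsOpen[hattori A] U) :
    ∀ x ∈ U, ∃ ε > 0, Set.Ico x (x + ε) ⊆ U := by
  have hU' : TopologicalSpace.GenerateOpen
      ({s : Set ℝ | IsOpen s} ∪ {s : Set ℝ | ∃ x ∉ A, ∃ ε > 0, s = Set.Ico x (x + ε)}) U := hU
  clear hU
  induction hU' with
  | basic s hs =>
    intro x hx
    rcases hs with hs | ⟨y, _, ε, hε, rfl⟩
    · have hs' : IsOpen s := hs
      rcases Metric.isOpen_iff.1 hs' x hx with ⟨δ, hδ, hball⟩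
      refine ⟨δ, hδ, fun z hz => hball ?_⟩
      simp only [Metric.mem_ball, Real.dist_eq, abs_lt]
      exact ⟨by linarith [hz.1], by linarith [hz.2]⟩
    · refine ⟨y + ε - x, by linarith [hx.1, hx.2], fun z hz => ?_⟩
      exact ⟨le_trans hx.1 hz.1, by linarith [hz.2]⟩
  | univ => exact fun x _ => ⟨1, one_pos, fun z _ => trivial⟩
  | inter s t _ _ ihs iht =>
    intro x hx
    obtain ⟨ε₁, hε₁, h₁⟩ := ihs x hx.1
    obtain ⟨ε₂, hε₂, h₂⟩ := iht x hx.2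
    refine ⟨min ε₁ ε₂, lt_min hε₁ hε₂, fun z hz => ?_⟩
    exact ⟨h₁ ⟨hz.1, lt_of_lt_of_le hz.2 (by linarith [min_le_left ε₁ ε₂])⟩,
      h₂ ⟨hz.1, lt_of_lt_of_le hz.2 (by linarith [min_le_right ε₁ ε₂])⟩⟩
  | sUnion S _ ih =>
    intro x hx
    obtain ⟨s, hsS, hxs⟩ := hx
    obtain ⟨ε, hε, hsub⟩ := ih s hsS x hxs
    exact ⟨ε, hε, fun z hz => ⟨s, hsS, hsub hz⟩⟩

/-- In a Hattori-compact set, every point outside A has a gap to its left. -/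
lemma hattori_left_gap {A K : Set ℝ} (hK : @IsCompact ℝ (hattori A) K)
    {x : ℝ} (hxK : x ∈ K) (hxA : x ∉ A) :
    ∃ ε > 0, Set.Ioo (x - ε) x ∩ K = ∅ := by
  by_contra hcon
  push_neg at hcon
  set f : ℕ → Set ℝ := fun n => if n = 0 then Set.Ici x else Set.Iio (x - 1 / n) with hf
  have hopen : ∀ n, IsOpen[hattori A] (f n) := by
    intro n
    by_cases hn : n = 0
    · have hIci : Set.Ici x = Set.Ico x (x + 1) ∪ Set.Ioi x := by
        ext z
        simp only [Set.mem_Ici, Set.mem_union, Set.mem_Ico, Set.mem_Ioi]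
        constructor
        · intro hz
          rcases lt_or_ge z (x + 1) with h1 | h1
          · exact Or.inl ⟨hz, h1⟩
          · exact Or.inr (by linarith)
        · rintro (⟨h1, _⟩ | h1)
          · exact h1
          · linarith
      simp only [hf, hn, if_pos rfl]
      rw [hIci]
      exact @IsOpen.union ℝ _ _ (hattori A) (isOpen_hattori_Ico hxA one_pos) (isOpen_hattori_of_isOpen isOpen_Ioi)
    · simp only [hf, if_neg hn]
      exact isOpen_hattori_of_isOpen isOpen_Iio
  have hcover : K ⊆ ⋃ n, f n := by
    intro y hy
    rcases le_or_gt x y with hxy | hxy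
    · exact Set.mem_iUnion.2 ⟨0, by simp [hf, hxy]⟩
    · obtain ⟨n, hn⟩ := exists_nat_one_div_lt (show 0 < x - y by linarith)
      refine Set.mem_iUnion.2 ⟨n + 1, ?_⟩
      simp only [hf, if_neg (Nat.succ_ne_zero n), Set.mem_Iio]
      push_cast
      linarith
  obtain ⟨s, hs⟩ := @IsCompact.elim_finite_subcover ℝ (hattori A) K ℕ hK f hopen hcover
  set M : ℕ := s.sup id with hM
  have hMle : ∀ i ∈ s, i ≤ M := fun i hi => Finset.le_sup (f := id) hi
  have hε : (0 : ℝ) < 1 / (M + 1) := by positivity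
  obtain ⟨y, hy1, hy2⟩ := hcon (1 / (M + 1)) hε
  obtain ⟨i, his, hyi⟩ := Set.mem_iUnion₂.1 (hs hy2)
  by_cases hi0 : i = 0
  · simp only [hf, hi0, if_pos rfl, Set.mem_Ici] at hyi
    linarith [hy1.2]
  · simp only [hf, if_neg hi0, Set.mem_Iio] at hyi
    have hi1 : 1 ≤ i := Nat.one_le_iff_ne_zero.2 hi0
    have hiM : (i : ℝ) < M + 1 := by
      exact_mod_cast Nat.lt_succ_of_le (hMle i his)
    have hipos : (0 : ℝ) < i := by exact_mod_cast hi1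
    have : (1 : ℝ) / (M + 1) < 1 / i := one_div_lt_one_div_of_lt hipos hiM
    linarith [hy1.1]

/-- The intersection of a Hattori-compact set with the complement of A is countable. -/
lemma hattori_compact_countable {A K : Set ℝ} (hK : @IsCompact ℝ (hattori A) K) :
    (K ∩ Aᶜ).Countable := by
  have hgap : ∀ x ∈ K ∩ Aᶜ, ∃ ε > 0, Set.Ioo (x - ε) x ∩ K = ∅ :=
    fun x hx => hattori_left_gap hK hx.1 hx.2
  choose! ε hε hgap using hgap
  have hq : ∀ x ∈ K ∩ Aᶜ, ∃ q : ℚ, (q : ℝ) ∈ Set.Ioo (x - ε x) x := by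
    intro x hx
    exact exists_rat_btwn (by linarith [hε x hx])
  choose! q hq using hq
  have hinj : Set.InjOn q (K ∩ Aᶜ) := by
    have key : ∀ a ∈ K ∩ Aᶜ, ∀ b ∈ K ∩ Aᶜ, a < b → (q a : ℝ) < q b := by
      intro a ha b hb hlt
      have h1 := hq a ha
      have h2 := hq b hb
      have hle : a ≤ b - ε b := by
        by_contra hc
        push_neg at hc
        have hmem : a ∈ Set.Ioo (b - ε b) b ∩ K := ⟨⟨hc, hlt⟩, ha.1⟩
        rw [hgap b hb] at hmem
        exact hmem
      linarith [h1.2, h2.1]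
    intro a ha b hb hab
    by_contra hne
    rcases lt_or_gt_of_ne hne with hlt | hlt
    · have := key a ha b hb hlt
      rw [hab] at this
      exact lt_irrefl _ this
    · have := key b hb a ha hlt
      rw [hab] at this
      exact lt_irrefl _ this
  exact Set.countable_iff_exists_injOn.2
    ⟨fun x => Encodable.encode (q x),
     fun a ha b hb hab => hinj ha hb (Encodable.encode_injective hab)⟩

/-- If H(A) is σ-compact then ℝ \ A is countable and nowhere dense in H(A). -/
theorem countable_nowhereDense_compl_of_sigmaCompact (A : Set ℝ)
    (h : @SigmaCompactSpace ℝ (hattori A)) :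
    (Aᶜ).Countable ∧ @IsNowhereDense ℝ (hattori A) Aᶜ := by
  obtain ⟨K, hKc, hKu⟩ := h.isSigmaCompact_univ
  have hcnt : (Aᶜ).Countable := by
    have hrw : Aᶜ = ⋃ n, (K n ∩ Aᶜ) := by
      rw [← Set.iUnion_inter, hKu, Set.univ_inter]
    rw [hrw]
    exact Set.countable_iUnion fun n => hattori_compact_countable (hKc n)
  refine ⟨hcnt, ?_⟩
  -- Euclidean compactness of the covering sets
  have hKeucl : ∀ n, IsCompact (K n) := by
    intro n
    have hcont : @Continuous ℝ ℝ (hattori A) _ id :=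
      continuous_id_of_le (hattori_le A)
    have := @IsCompact.image ℝ ℝ (hattori A) _ (K n) id (hKc n) hcont
    rwa [Set.image_id] at this
  show @interior ℝ (hattori A) (@closure ℝ (hattori A) Aᶜ) = ∅
  by_contra hne
  obtain ⟨x, hx⟩ := Set.nonempty_iff_ne_empty.2 hne
  obtain ⟨ε, hε, hIco⟩ :=
    hattori_exists_Ico (@isOpen_interior ℝ (hattori A) (@closure ℝ (hattori A) Aᶜ)) x hx
  -- the Hattori closure is contained in the Euclidean closure
  have hclsub : @closure ℝ (hattori A) Aᶜ ⊆ closure Aᶜ := by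
    refine @closure_minimal ℝ (hattori A) _ _ subset_closure ?_
    exact @IsClosed.mk ℝ (hattori A) _ (isOpen_hattori_of_isOpen isClosed_closure.isOpen_compl)
  have hIoo : Set.Ioo x (x + ε) ⊆ closure Aᶜ := by
    intro z hz
    exact hclsub (@interior_subset ℝ (hattori A) _ z (hIco ⟨le_of_lt hz.1, hz.2⟩))
  -- Baire category: some K n has interior meeting Ioo x (x+ε)
  have hdense : Dense (⋃ n, interior (K n)) :=
    dense_iUnion_interior_of_closed (fun n => (hKeucl n).isClosed) hKu
  obtain ⟨y, hy1, hy2⟩ := hdense.exists_mem_open (isOpen_Ioo (a := x) (b := x + ε))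
    (Set.nonempty_Ioo.2 (show x < x + ε by linarith))
  obtain ⟨n, hyn⟩ := Set.mem_iUnion.1 hy1
  -- U is a Euclidean-open set contained in K n and in the closure of Aᶜ
  set U : Set ℝ := interior (K n) ∩ Set.Ioo x (x + ε) with hU
  have hUopen : IsOpen U := isOpen_interior.inter isOpen_Ioo
  have hyU : y ∈ U := ⟨hyn, hy2⟩
  -- find a point of Aᶜ in U
  have hycl : y ∈ closure Aᶜ := hIoo hy2
  obtain ⟨w, hwU, hwA⟩ := (_root_.mem_closure_iff.1 hycl) U hUopen hyU
  have hwK : w ∈ K n := interior_subset hwU.1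
  obtain ⟨δ, hδ, hgap⟩ := hattori_left_gap (hKc n) hwK hwA
  -- but U is Euclidean-open around w, so K n has points just left of w
  obtain ⟨r, hr, hball⟩ := Metric.isOpen_iff.1 hUopen w hwU
  set z : ℝ := w - min δ r / 2 with hz
  have hmin : 0 < min δ r := lt_min hδ hr
  have hzball : z ∈ Metric.ball w r := by
    simp only [Metric.mem_ball, Real.dist_eq, hz]
    rw [abs_of_nonpos (by linarith [min_le_right δ r])]
    simp only [neg_sub]
    linarith [min_le_right δ r]
  have hzK : z ∈ K n := interior_subset (hball hzball).1
  have hzgap : z ∈ Set.Ioo (w - δ) w ∩ K n :=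
    ⟨⟨by simp only [hz]; linarith [min_le_left δ r], by simp only [hz]; linarith⟩, hzK⟩
  rw [hgap] at hzgap
  exact hzgap
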